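/- Let K be an algebraically closed field and F = K(x). Let S be a finite-dimensional K-subspace of F of dimension n, let v be one of the valuations v_α (α ∈ K) or v_∞, and let S_1 ⊂ … ⊂ S_n be the natural filtration of S with respect to v, with combinatorial genii γ_i. Suppose γ_n ≥ 1, and let t be the least index with γ_t = γ_n (equivalently, since the γ_i are nondecreasing, the largest index with γ_t > γ_{t−1}). Then K(S_t) = K(S). -/

import Mathlib

open Polynomial Pointwise

noncomputable section

namespace FFF

set_option linter.unusedSectionVars false
set_option linter.unusedVariables false
set_option maxHeartbeats 1000000

variable {K : Type*} [Field K] [IsAlgClosed K]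

/-- Valuation of a rational function at the finite place `x - α`
(order of vanishing at `x - α`). -/
def vA (α : K) (f : RatFunc K) : ℤ :=
  (Polynomial.rootMultiplicity α f.num : ℤ) - (Polynomial.rootMultiplicity α f.denom : ℤ)

/-- Valuation of a rational function at the place at infinity:
`deg (denominator) - deg (numerator)`. -/
def vInf (f : RatFunc K) : ℤ := -f.intDegree

/-- The places of `K(x)`: `some α` is the finite place at `α ∈ K`, `none` is the
place at infinity; `plval p` is the associated valuation. -/
def plval (p : Option K) (f : RatFunc K) : ℤ :=
  Option.elim p (vInf f) (fun α => vA α f)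

/-- The degree of a rational function, `deg f = -v∞(f)`. -/
def fdeg (f : RatFunc K) : ℤ := f.intDegree

/-- A divisor on `K(x)`: an integer for every place, zero for all but finitely many. -/
abbrev Divisor (K : Type*) [Field K] := Option K →₀ ℤ

/-- The degree of a divisor: the sum of its values. -/
def divDeg (D : Divisor K) : ℤ := D.sum fun _ n => n

/-- The Riemann–Roch space `L(D)` of a divisor `D`. -/
def RRset (D : Divisor K) : Set (RatFunc K) :=
  {f | f = 0 ∨ ∀ p : Option K, -(D p) ≤ plval p f}

/-- The subfield `K(T)` of `K(x)` generated by the constants `K` and a set `T`. -/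
def Kgen (T : Set (RatFunc K)) : Subfield (RatFunc K) :=
  Subfield.closure ((Set.range fun a : K => (RatFunc.C a : RatFunc K)) ∪ T)

/-- The combinatorial genus `γ = dim S² - 2 dim S + 1` of a subspace `S`. -/
def cgenus (S : Submodule K (RatFunc K)) : ℤ :=
  (Module.finrank K ↥(S * S) : ℤ) - 2 * (Module.finrank K ↥S : ℤ) + 1

/-- `sfil e i` is the `i`-th step (1-indexed) of the natural filtration attached to a
filtered basis `e`: the span of the first `i` basis vectors. -/
def sfil {n : ℕ} (e : Fin n → RatFunc K) (i : ℕ) : Submodule K (RatFunc K) :=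
  Submodule.span K (e '' {j | (j : ℕ) < i})

/-- `e` is a filtered basis of `S` with respect to the valuation `v`:
a basis of `S` with strictly decreasing valuations. -/
def IsFilteredBasis {n : ℕ} (v : RatFunc K → ℤ) (S : Submodule K (RatFunc K))
    (e : Fin n → RatFunc K) : Prop :=
  LinearIndependent K e ∧ Submodule.span K (Set.range e) = S ∧
    StrictAnti fun i => v (e i)

/-- `D` is the divisor of least degree with `S ⊆ L(D)`, i.e.
`D(P) = -min {v_P s : s ∈ S, s ≠ 0}` for every place `P`. -/
def IsMinDivisor (S : Submodule K (RatFunc K)) (D : Divisor K) : Prop :=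
  ∀ p : Option K, IsLeast {d : ℤ | ∃ s ∈ S, s ≠ 0 ∧ plval p s = d} (-(D p))

/-! ### Valuation lemmas -/

lemma vA_eq_of_eq_div (α : K) {f : RatFunc K} (hf : f ≠ 0) {p q : K[X]} (hp : p ≠ 0) (hq : q ≠ 0)
    (h : f = algebraMap K[X] (RatFunc K) p / algebraMap K[X] (RatFunc K) q) :
    vA α f = (rootMultiplicity α p : ℤ) - (rootMultiplicity α q : ℤ) := by
  have hq' : (algebraMap K[X] (RatFunc K)) q ≠ 0 := by
    simpa using (RatFunc.algebraMap_ne_zero hq)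
  have hd' : (algebraMap K[X] (RatFunc K)) f.denom ≠ 0 := by
    simpa using (RatFunc.algebraMap_ne_zero f.denom_ne_zero)
  have key : f.num * q = p * f.denom := by
    apply RatFunc.algebraMap_injective K
    push_cast [map_mul]
    rw [← div_eq_div_iff hd' hq', RatFunc.num_div_denom, h]
  have hnum : f.num ≠ 0 := RatFunc.num_ne_zero hf
  have h1 : rootMultiplicity α (f.num * q) = rootMultiplicity α (p * f.denom) := by rw [key]
  rw [rootMultiplicity_mul (mul_ne_zero hnum hq),
    rootMultiplicity_mul (mul_ne_zero hp f.denom_ne_zero)] at h1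
  unfold vA
  omega

lemma vA_mul (α : K) {f g : RatFunc K} (hf : f ≠ 0) (hg : g ≠ 0) :
    vA α (f * g) = vA α f + vA α g := by
  have h : f * g = algebraMap K[X] (RatFunc K) (f.num * g.num) /
      algebraMap K[X] (RatFunc K) (f.denom * g.denom) := by
    rw [map_mul, map_mul, ← div_mul_div_comm, RatFunc.num_div_denom, RatFunc.num_div_denom]
  rw [vA_eq_of_eq_div α (mul_ne_zero hf hg)
    (mul_ne_zero (RatFunc.num_ne_zero hf) (RatFunc.num_ne_zero hg))
    (mul_ne_zero f.denom_ne_zero g.denom_ne_zero) h,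
    rootMultiplicity_mul (mul_ne_zero (RatFunc.num_ne_zero hf) (RatFunc.num_ne_zero hg)),
    rootMultiplicity_mul (mul_ne_zero f.denom_ne_zero g.denom_ne_zero)]
  unfold vA; push_cast; ring

lemma rootMultiplicity_add_ge {A B : K[X]} (α : K) (hAB : A + B ≠ 0) :
    min (rootMultiplicity α A) (rootMultiplicity α B) ≤ rootMultiplicity α (A + B) := by
  rw [le_rootMultiplicity_iff hAB]
  exact dvd_add (dvd_trans (pow_dvd_pow _ (min_le_left _ _)) (pow_rootMultiplicity_dvd A α))
    (dvd_trans (pow_dvd_pow _ (min_le_right _ _)) (pow_rootMultiplicity_dvd B α))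

lemma vA_add (α : K) {f g : RatFunc K} (hf : f ≠ 0) (hg : g ≠ 0) (hfg : f + g ≠ 0) :
    min (vA α f) (vA α g) ≤ vA α (f + g) := by
  set A := f.num * g.denom + g.num * f.denom with hA
  have h : f + g = algebraMap K[X] (RatFunc K) A /
      algebraMap K[X] (RatFunc K) (f.denom * g.denom) := by
    rw [hA]
    push_cast [map_mul, map_add]
    rw [add_div, mul_div_mul_right _ _ (by simpa using RatFunc.algebraMap_ne_zero g.denom_ne_zero),
      mul_comm ((algebraMap K[X] (RatFunc K)) g.num) _,
      mul_div_mul_left _ _ (by simpa using RatFunc.algebraMap_ne_zero f.denom_ne_zero),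
      RatFunc.num_div_denom, RatFunc.num_div_denom]
  have hAne : A ≠ 0 := by
    intro h0
    rw [h0] at h
    simp at h
    exact hfg h
  rw [vA_eq_of_eq_div α hfg hAne (mul_ne_zero f.denom_ne_zero g.denom_ne_zero) h]
  have h1 := rootMultiplicity_add_ge α (A := f.num * g.denom) (B := g.num * f.denom)
    (by rwa [← hA])
  rw [rootMultiplicity_mul (mul_ne_zero (RatFunc.num_ne_zero hf) g.denom_ne_zero),
    rootMultiplicity_mul (mul_ne_zero (RatFunc.num_ne_zero hg) f.denom_ne_zero), ← hA] at h1
  rw [rootMultiplicity_mul (mul_ne_zero f.denom_ne_zero g.denom_ne_zero)]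
  unfold vA
  omega

lemma vA_C (α : K) {a : K} (ha : a ≠ 0) : vA α (RatFunc.C a) = 0 := by
  have h : (RatFunc.C a : RatFunc K) = algebraMap K[X] (RatFunc K) (Polynomial.C a) /
      algebraMap K[X] (RatFunc K) 1 := by
    simp [RatFunc.algebraMap_C]
  rw [vA_eq_of_eq_div α (by simpa using ha) (by simpa using ha) one_ne_zero h]
  simp [rootMultiplicity_C]

lemma plval_mul (p : Option K) {f g : RatFunc K} (hf : f ≠ 0) (hg : g ≠ 0) :
    plval p (f * g) = plval p f + plval p g := by
  cases p with
  | none => unfold plval vInf; simp [RatFunc.intDegree_mul hf hg]; ring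
  | some α => exact vA_mul α hf hg

lemma plval_add (p : Option K) {f g : RatFunc K} (hf : f ≠ 0) (hg : g ≠ 0) (hfg : f + g ≠ 0) :
    min (plval p f) (plval p g) ≤ plval p (f + g) := by
  cases p with
  | none =>
    unfold plval vInf
    simp only [Option.elim]
    have := RatFunc.intDegree_add_le hg hfg
    omega
  | some α => exact vA_add α hf hg hfg

lemma plval_C (p : Option K) {a : K} (ha : a ≠ 0) : plval p (RatFunc.C a) = 0 := by
  cases p with
  | none => unfold plval vInf; simp [RatFunc.intDegree_C]
  | some α => exact vA_C α ha

lemma plval_smul (p : Option K) {f : RatFunc K} {a : K} (ha : a ≠ 0) (hf : f ≠ 0) :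
    plval p (a • f) = plval p f := by
  rw [RatFunc.smul_eq_C_mul, plval_mul p (by simpa using ha) hf, plval_C p ha, zero_add]

/-! ### Lower bounds on valuations over spans -/

/-- lower bound predicate: `x` is `0` or has valuation at least `c`. -/
def LB (p : Option K) (c : ℤ) (x : RatFunc K) : Prop := x = 0 ∨ c ≤ plval p x

lemma LB_mono {p : Option K} {c c' : ℤ} (h : c' ≤ c) {x : RatFunc K} (hx : LB p c x) :
    LB p c' x := hx.imp id (le_trans h)

lemma LB_add {p : Option K} {c : ℤ} {x y : RatFunc K} (hx : LB p c x) (hy : LB p c y) :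
    LB p c (x + y) := by
  by_cases hx0 : x = 0
  · subst hx0; simpa using hy
  by_cases hy0 : y = 0
  · subst hy0; simpa using hx
  replace hx := hx.resolve_left hx0
  replace hy := hy.resolve_left hy0
  by_cases hxy : x + y = 0
  · exact Or.inl hxy
  · exact Or.inr (le_trans (le_min hx hy) (plval_add p hx0 hy0 hxy))

lemma LB_smul {p : Option K} {c : ℤ} {a : K} {x : RatFunc K} (hx : LB p c x) :
    LB p c (a • x) := by
  rcases eq_or_ne a 0 with rfl | ha
  · simp [LB]
  rcases hx with rfl | hx
  · simp [LB]
  rcases eq_or_ne x 0 with rfl | hx0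
  · simp [LB]
  · exact Or.inr (by rwa [plval_smul p ha hx0])

lemma LB_span {p : Option K} {c : ℤ} {G : Set (RatFunc K)}
    (hG : ∀ g ∈ G, LB p c g) {q : RatFunc K} (hq : q ∈ Submodule.span K G) : LB p c q := by
  induction hq using Submodule.span_induction with
  | mem x hx => exact hG x hx
  | zero => exact Or.inl rfl
  | add x y _ _ hx hy => exact LB_add hx hy
  | smul a x _ hx => exact LB_smul hx

lemma plval_neg (p : Option K) {f : RatFunc K} (hf : f ≠ 0) : plval p (-f) = plval p f := by
  rw [← neg_one_smul K f, plval_smul p (by norm_num) hf]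

/-- The key independence lemma from valuations. -/
lemma triple_indep {p : Option K} {u₁ u₂ : RatFunc K} {c : ℤ}
    (hu₁ : u₁ ≠ 0) (hu₂ : u₂ ≠ 0) (h21 : plval p u₂ < plval p u₁) (h1c : plval p u₁ < c)
    {q : RatFunc K} (hq : LB p c q) {c₁ c₂ : K}
    (h : q + c₁ • u₁ + c₂ • u₂ = 0) : q = 0 ∧ c₁ = 0 ∧ c₂ = 0 := by
  have hx : LB p (plval p u₁) (q + c₁ • u₁) :=
    LB_add (LB_mono h1c.le hq) (LB_smul (Or.inr le_rfl))
  have hc₂ : c₂ = 0 := by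
    by_contra hc₂
    have h2 : q + c₁ • u₁ = -(c₂ • u₂) := by linear_combination (norm := module) h
    have hne : q + c₁ • u₁ ≠ 0 := by
      rw [h2]; simpa using ⟨hc₂, hu₂⟩
    rcases hx with h0 | hx
    · exact hne h0
    rw [h2, plval_neg p (by simpa using ⟨hc₂, hu₂⟩), plval_smul p hc₂ hu₂] at hx
    omega
  subst hc₂
  have hc₁ : c₁ = 0 := by
    by_contra hc₁
    have h2 : q = -(c₁ • u₁) := by linear_combination (norm := module) h
    have hne : q ≠ 0 := by rw [h2]; simpa using ⟨hc₁, hu₁⟩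
    rcases hq with h0 | hq
    · exact hne h0
    rw [h2, plval_neg p (by simpa using ⟨hc₁, hu₁⟩), plval_smul p hc₁ hu₁] at hq
    omega
  subst hc₁
  refine ⟨by simpa using h, rfl, rfl⟩

/-- dimension bump: adjoining two elements of small distinct valuations adds 2 to
the dimension. -/
lemma finrank_sup_pair {p : Option K} {u₁ u₂ : RatFunc K} {c : ℤ}
    (hu₁ : u₁ ≠ 0) (hu₂ : u₂ ≠ 0) (h21 : plval p u₂ < plval p u₁) (h1c : plval p u₁ < c)
    {T₂ : Submodule K (RatFunc K)} [FiniteDimensional K T₂]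
    (hT₂ : ∀ q ∈ T₂, LB p c q) :
    Module.finrank K ↥(T₂ ⊔ Submodule.span K {u₁, u₂}) = Module.finrank K ↥T₂ + 2 := by
  have hW : Module.finrank K ↥(Submodule.span K ({u₁, u₂} : Set (RatFunc K))) = 2 := by
    have hli : LinearIndependent K ![u₁, u₂] := by
      rw [LinearIndependent.pair_iff]
      intro s t hst
      have := triple_indep hu₁ hu₂ h21 h1c (hT₂ 0 (zero_mem _)) (c₁ := s) (c₂ := t)
        (by rw [zero_add]; exact hst)
      exact ⟨this.2.1, this.2.2⟩
    have hr : Set.range ![u₁, u₂] = {u₁, u₂} := by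
      simp [Matrix.range_cons, Matrix.range_empty]
      rw [Set.pair_comm]
    have := finrank_span_eq_card (R := K) hli
    rwa [hr, Fintype.card_fin] at this
  have hinf : T₂ ⊓ Submodule.span K ({u₁, u₂} : Set (RatFunc K)) = ⊥ := by
    rw [eq_bot_iff]
    intro x hx
    have hx1 : x ∈ T₂ := hx.1
    have hx2 : x ∈ Submodule.span K ({u₁, u₂} : Set (RatFunc K)) := hx.2
    rw [Submodule.mem_span_pair] at hx2
    obtain ⟨a, b, hab⟩ := hx2
    have : (-x) + a • u₁ + b • u₂ = 0 := by
      rw [add_assoc, hab]; ring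
    have h3 := triple_indep hu₁ hu₂ h21 h1c (hT₂ (-x) (neg_mem hx1)) this
    have : x = 0 := by have := h3.1; simpa using this
    simp [this]
  haveI : FiniteDimensional K ↥(Submodule.span K ({u₁, u₂} : Set (RatFunc K))) :=
    FiniteDimensional.span_of_finite K ((Set.finite_singleton u₂).insert u₁)
  have := Submodule.finrank_sup_add_finrank_inf_eq T₂
    (Submodule.span K ({u₁, u₂} : Set (RatFunc K)))
  rw [hinf, hW] at this
  simpa using this

/-! ### Generated subfield lemmas -/

lemma C_mem_Kgen (T : Set (RatFunc K)) (a : K) : RatFunc.C a ∈ Kgen T :=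
  Subfield.subset_closure (Or.inl ⟨a, rfl⟩)

lemma subset_Kgen (T : Set (RatFunc K)) : T ⊆ ↑(Kgen T) :=
  fun _ hx => Subfield.subset_closure (Or.inr hx)

lemma span_mem_Kgen {T G : Set (RatFunc K)} (h : G ⊆ ↑(Kgen T)) :
    ∀ x ∈ Submodule.span K G, x ∈ Kgen T := by
  intro x hx
  induction hx using Submodule.span_induction with
  | mem x hx => exact h hx
  | zero => exact zero_mem _
  | add x y _ _ hx hy => exact add_mem hx hy
  | smul a x _ hx => rw [RatFunc.smul_eq_C_mul]; exact mul_mem (C_mem_Kgen T a) hx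

lemma Kgen_mono {A B : Set (RatFunc K)} (h : A ⊆ B) : Kgen A ≤ Kgen B :=
  Subfield.closure_mono (Set.union_subset_union_right _ h)

lemma sq_mem_Kgen {T : Submodule K (RatFunc K)} {x : RatFunc K} (hx : x ∈ T * T) :
    x ∈ Kgen (T : Set (RatFunc K)) :=
  Submodule.mul_induction_on hx
    (fun m hm n hn => mul_mem (subset_Kgen _ hm) (subset_Kgen _ hn))
    (fun x y hx hy => add_mem hx hy)

/-! ### Filtration lemmas -/

section sfillems

variable {n : ℕ} {e : Fin n → RatFunc K}

lemma sfil_mono {i j : ℕ} (h : i ≤ j) : sfil e i ≤ sfil e j :=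
  Submodule.span_mono (Set.image_mono fun _ hx => lt_of_lt_of_le hx h)

lemma sfil_fd (i : ℕ) : FiniteDimensional K ↥(sfil e i) :=
  FiniteDimensional.span_of_finite K (Set.toFinite _)

lemma sfil_sq_eq (i : ℕ) : sfil e i * sfil e i =
    Submodule.span K ((e '' {j | (j : ℕ) < i}) * (e '' {j | (j : ℕ) < i})) :=
  Submodule.span_mul_span K _ _

lemma sfil_sq_fd (i : ℕ) : FiniteDimensional K ↥(sfil e i * sfil e i) := by
  rw [sfil_sq_eq]
  exact FiniteDimensional.span_of_finite K ((Set.toFinite _).mul (Set.toFinite _))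

lemma sfil_finrank (hli : LinearIndependent K e) {i : ℕ} (h : i ≤ n) :
    Module.finrank K ↥(sfil e i) = i := by
  have hli2 : LinearIndependent K (e ∘ Fin.castLE h) :=
    hli.comp _ (Fin.castLE_injective h)
  have hr : Set.range (e ∘ Fin.castLE h) = e '' {j | (j : ℕ) < i} := by
    ext x
    constructor
    · rintro ⟨j, rfl⟩
      exact ⟨Fin.castLE h j, j.isLt, rfl⟩
    · rintro ⟨j, hj, rfl⟩
      exact ⟨⟨(j : ℕ), hj⟩, by simp [Function.comp, Fin.castLE]⟩
  rw [sfil, ← hr, finrank_span_eq_card hli2, Fintype.card_fin]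

lemma mem_sfil {i : ℕ} (j : Fin n) (hj : (j : ℕ) < i) : e j ∈ sfil e i :=
  Submodule.subset_span ⟨j, hj, rfl⟩

lemma LB_sfil_sq (hli : LinearIndependent K e) {p : Option K}
    (hanti : StrictAnti fun i => plval p (e i)) {i : ℕ} (h1 : 1 ≤ i) (h2 : i ≤ n) :
    ∀ q ∈ sfil e i * sfil e i, LB p (2 * plval p (e ⟨i - 1, by omega⟩)) q := by
  intro q hq
  rw [sfil_sq_eq] at hq
  refine LB_span ?_ hq
  intro g hg
  obtain ⟨x, hx, y, hy, rfl⟩ := Set.mem_mul.mp hg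
  obtain ⟨ax, hax, rfl⟩ := hx
  obtain ⟨ay, hay, rfl⟩ := hy
  have hax' : (ax : ℕ) < i := hax
  have hay' : (ay : ℕ) < i := hay
  right
  rw [plval_mul p (hli.ne_zero ax) (hli.ne_zero ay)]
  have h1' : plval p (e ⟨i - 1, by omega⟩) ≤ plval p (e ax) :=
    hanti.antitone (by rw [Fin.le_def]; simp; omega)
  have h2' : plval p (e ⟨i - 1, by omega⟩) ≤ plval p (e ay) :=
    hanti.antitone (by rw [Fin.le_def]; simp; omega)
  omega

lemma sq_step (hli : LinearIndependent K e) {p : Option K}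
    (hanti : StrictAnti fun i => plval p (e i)) {i : ℕ} (h1 : 1 ≤ i) (h2 : i < n) :
    Module.finrank K ↥(sfil e i * sfil e i) + 2
      ≤ Module.finrank K ↥(sfil e (i + 1) * sfil e (i + 1)) ∧
    (Module.finrank K ↥(sfil e (i + 1) * sfil e (i + 1))
        ≤ Module.finrank K ↥(sfil e i * sfil e i) + 2 →
      sfil e (i + 1) * sfil e (i + 1) = sfil e i * sfil e i ⊔
        Submodule.span K {e ⟨i, h2⟩ * e ⟨i - 1, by omega⟩, e ⟨i, h2⟩ * e ⟨i, h2⟩}) := by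
  haveI := sfil_sq_fd (K := K) (e := e) i
  haveI := sfil_sq_fd (K := K) (e := e) (i + 1)
  set f := e ⟨i, h2⟩ with hf
  set g := e ⟨i - 1, by omega⟩ with hg
  have hfne : f ≠ 0 := hli.ne_zero _
  have hgne : g ≠ 0 := hli.ne_zero _
  have hba : plval p f < plval p g := hanti (by rw [Fin.lt_def]; simp; omega)
  have hu₁ : f * g ≠ 0 := mul_ne_zero hfne hgne
  have hu₂ : f * f ≠ 0 := mul_ne_zero hfne hfne
  have hv₁ : plval p (f * g) = plval p f + plval p g := plval_mul p hfne hgne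
  have hv₂ : plval p (f * f) = plval p f + plval p f := plval_mul p hfne hfne
  have h21 : plval p (f * f) < plval p (f * g) := by omega
  have h1c : plval p (f * g) < 2 * plval p g := by omega
  have hLB := LB_sfil_sq hli hanti h1 h2.le
  have hfr := finrank_sup_pair hu₁ hu₂ h21 h1c (T₂ := sfil e i * sfil e i) hLB
  have hle : sfil e i * sfil e i ⊔ Submodule.span K {f * g, f * f}
      ≤ sfil e (i + 1) * sfil e (i + 1) := by
    refine sup_le (mul_le_mul' (sfil_mono (Nat.le_succ i)) (sfil_mono (Nat.le_succ i))) ?_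
    rw [Submodule.span_le]
    rintro x (rfl | rfl)
    · exact Submodule.mul_mem_mul (mem_sfil _ (by simp)) (mem_sfil _ (by simp))
    · exact Submodule.mul_mem_mul (mem_sfil _ (by simp)) (mem_sfil _ (by simp))
  constructor
  · rw [← hfr]
    exact Submodule.finrank_mono hle
  · intro hub
    refine (Submodule.eq_of_le_of_finrank_le hle ?_).symm
    rw [hfr]
    exact hub

lemma genus_step_mono (hli : LinearIndependent K e) {p : Option K}
    (hanti : StrictAnti fun i => plval p (e i)) {i : ℕ} (h1 : 1 ≤ i) (h2 : i < n) :
    cgenus (sfil e i) ≤ cgenus (sfil e (i + 1)) := by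
  have := (sq_step hli hanti h1 h2).1
  unfold cgenus
  rw [sfil_finrank hli h2.le, sfil_finrank hli (by omega : i + 1 ≤ n)]
  push_cast
  omega

lemma finrank_span_singleton_le (x : RatFunc K) :
    Module.finrank K ↥(Submodule.span K ({x} : Set (RatFunc K))) ≤ 1 := by
  rcases eq_or_ne x 0 with rfl | hx
  · rw [Submodule.span_zero_singleton]
    simp
  · rw [finrank_span_singleton hx]

lemma finrank_sup_le' (A B : Submodule K (RatFunc K)) [FiniteDimensional K A]
    [FiniteDimensional K B] :
    Module.finrank K ↥(A ⊔ B) ≤ Module.finrank K ↥A + Module.finrank K ↥B := by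
  have := Submodule.finrank_sup_add_finrank_inf_eq A B
  omega

lemma genus_small (hli : LinearIndependent K e) {i : ℕ} (h1 : 1 ≤ i) (h2 : i ≤ 2)
    (h3 : i ≤ n) : cgenus (sfil e i) ≤ 0 := by
  haveI := sfil_sq_fd (K := K) (e := e) i
  have hfr : Module.finrank K ↥(sfil e i) = i := sfil_finrank hli h3
  interval_cases i
  · -- i = 1
    have hs : e '' {j : Fin n | (j : ℕ) < 1} = {e ⟨0, by omega⟩} := by
      ext x
      constructor
      · rintro ⟨j, hj, rfl⟩
        have hj' : (j : ℕ) < 1 := hj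
        have : j = ⟨0, by omega⟩ := by apply Fin.ext; simp; omega
        simp [this]
      · rintro rfl
        exact ⟨⟨0, by omega⟩, by simp, rfl⟩
    have hsq : sfil e 1 * sfil e 1 =
        Submodule.span K {e ⟨0, by omega⟩ * e ⟨0, by omega⟩} := by
      rw [sfil_sq_eq, hs, Set.singleton_mul_singleton]
    have hb : Module.finrank K ↥(sfil e 1 * sfil e 1) ≤ 1 := by
      rw [hsq]; exact finrank_span_singleton_le _
    unfold cgenus
    rw [hfr]
    push_cast
    omega
  · -- i = 2
    have hs : e '' {j : Fin n | (j : ℕ) < 2} = {e ⟨0, by omega⟩, e ⟨1, by omega⟩} := by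
      ext x
      simp only [Set.mem_image, Set.mem_setOf_eq, Set.mem_insert_iff, Set.mem_singleton_iff]
      constructor
      · rintro ⟨j, hj, rfl⟩
        have hj2 : (j : ℕ) = 0 ∨ (j : ℕ) = 1 := by
          have hj' : (j : ℕ) < 2 := hj
          omega
        rcases hj2 with h0 | h0
        · exact Or.inl (congrArg e (by apply Fin.ext; simp [h0]))
        · exact Or.inr (congrArg e (by apply Fin.ext; simp [h0]))
      · rintro (rfl | rfl)
        · exact ⟨⟨0, by omega⟩, by simp, rfl⟩
        · exact ⟨⟨1, by omega⟩, by simp, rfl⟩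
    set a := e ⟨0, by omega⟩ with ha
    set b := e ⟨1, by omega⟩ with hbb
    have hsub : ({a, b} : Set (RatFunc K)) * {a, b} ⊆ {a * a, a * b, b * b} := by
      rintro z hz
      obtain ⟨x, hx, y, hy, rfl⟩ := Set.mem_mul.mp hz
      simp only [Set.mem_insert_iff, Set.mem_singleton_iff] at hx hy ⊢
      rcases hx with rfl | rfl <;> rcases hy with rfl | rfl
      · exact Or.inl rfl
      · exact Or.inr (Or.inl rfl)
      · exact Or.inr (Or.inl (mul_comm _ _))
      · exact Or.inr (Or.inr rfl)
    have hb3 : Module.finrank K ↥(sfil e 2 * sfil e 2) ≤ 3 := by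
      rw [sfil_sq_eq, hs]
      haveI : FiniteDimensional K
          ↥(Submodule.span K ({a * a, a * b, b * b} : Set (RatFunc K))) :=
        FiniteDimensional.span_of_finite K
          (((Set.finite_singleton _).insert _).insert _)
      refine le_trans (Submodule.finrank_mono (Submodule.span_mono hsub)) ?_
      rw [Submodule.span_insert, Submodule.span_insert]
      haveI I1 : FiniteDimensional K ↥(Submodule.span K ({a * a} : Set (RatFunc K))) :=
        FiniteDimensional.span_of_finite K (Set.finite_singleton _)
      haveI I2 : FiniteDimensional K ↥(Submodule.span K ({a * b} : Set (RatFunc K))) :=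
        FiniteDimensional.span_of_finite K (Set.finite_singleton _)
      haveI I3 : FiniteDimensional K ↥(Submodule.span K ({b * b} : Set (RatFunc K))) :=
        FiniteDimensional.span_of_finite K (Set.finite_singleton _)
      have k1 := finrank_sup_le' (Submodule.span K ({a * b} : Set (RatFunc K)))
        (Submodule.span K ({b * b} : Set (RatFunc K)))
      have k2 := finrank_sup_le' (Submodule.span K ({a * a} : Set (RatFunc K)))
        (Submodule.span K ({a * b} : Set (RatFunc K)) ⊔
          Submodule.span K ({b * b} : Set (RatFunc K)))
      have k3 := finrank_span_singleton_le (K := K) (a * a)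
      have k4 := finrank_span_singleton_le (K := K) (a * b)
      have k5 := finrank_span_singleton_le (K := K) (b * b)
      omega
    unfold cgenus
    rw [hfr]
    push_cast
    omega

/-- The main step: if the genus does not grow when passing from `S_i` to `S_{i+1}`
(and it is positive, forcing `i ≥ 3`), then `e i` lies in the field generated by `S_i`. -/
lemma step_main (hli : LinearIndependent K e) {p : Option K}
    (hanti : StrictAnti fun i => plval p (e i)) {i : ℕ} (h3 : 3 ≤ i) (h2 : i < n)
    (hgeq : cgenus (sfil e (i + 1)) = cgenus (sfil e i)) :
    e ⟨i, h2⟩ ∈ Kgen ((sfil e i : Submodule K (RatFunc K)) : Set (RatFunc K)) := by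
  haveI := sfil_sq_fd (K := K) (e := e) i
  haveI := sfil_sq_fd (K := K) (e := e) (i + 1)
  haveI := sfil_fd (K := K) (e := e) i
  haveI := sfil_fd (K := K) (e := e) (i + 1)
  have hfrT : Module.finrank K ↥(sfil e i) = i := sfil_finrank hli h2.le
  have hfrU : Module.finrank K ↥(sfil e (i + 1)) = i + 1 :=
    sfil_finrank hli (by omega : i + 1 ≤ n)
  have hub : Module.finrank K ↥(sfil e (i + 1) * sfil e (i + 1))
      ≤ Module.finrank K ↥(sfil e i * sfil e i) + 2 := by
    unfold cgenus at hgeq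
    rw [hfrT, hfrU] at hgeq
    omega
  have hEq := (sq_step hli hanti (by omega) h2).2 hub
  set f := e ⟨i, h2⟩ with hfdef
  set g := e ⟨i - 1, by omega⟩ with hgdef
  set T := sfil e i with hT
  set U := sfil e (i + 1) with hU
  set W := Submodule.span K ({f * g, f * f} : Set (RatFunc K)) with hW
  haveI : FiniteDimensional K ↥W :=
    FiniteDimensional.span_of_finite K ((Set.finite_singleton _).insert _)
  -- the multiplication-by-f map into the quotient
  set ψ : ↥U →ₗ[K] RatFunc K ⧸ (T * T) :=
    ((T * T).mkQ.comp (LinearMap.mulLeft K f)).comp U.subtype with hψ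
  have hψval : ∀ u : ↥U, ψ u = (T * T).mkQ (f * (u : RatFunc K)) := fun u => rfl
  have hrange : LinearMap.range ψ ≤ Submodule.map (T * T).mkQ W := by
    rintro y ⟨u, rfl⟩
    have hmem : f * (u : RatFunc K) ∈ T * T ⊔ W := by
      rw [← hEq]
      exact Submodule.mul_mem_mul (mem_sfil _ (by simp)) u.2
    rw [Submodule.mem_sup] at hmem
    obtain ⟨q, hq, w, hw, hqw⟩ := hmem
    refine ⟨w, hw, ?_⟩
    rw [hψval, ← hqw, map_add]
    have : (T * T).mkQ q = 0 := by
      rw [Submodule.mkQ_apply, Submodule.Quotient.mk_eq_zero]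
      exact hq
    rw [this, zero_add]
  haveI : FiniteDimensional K ↥(Submodule.map (T * T).mkQ W) := Module.Finite.map W _
  have hrk : Module.finrank K ↥(LinearMap.range ψ) ≤ 2 := by
    refine le_trans (Submodule.finrank_mono hrange) ?_
    refine le_trans (Submodule.finrank_map_le _ _) ?_
    rw [hW, Submodule.span_insert]
    haveI I1 : FiniteDimensional K ↥(Submodule.span K ({f * g} : Set (RatFunc K))) :=
      FiniteDimensional.span_of_finite K (Set.finite_singleton _)
    haveI I2 : FiniteDimensional K ↥(Submodule.span K ({f * f} : Set (RatFunc K))) :=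
      FiniteDimensional.span_of_finite K (Set.finite_singleton _)
    have k1 := finrank_sup_le' (Submodule.span K ({f * g} : Set (RatFunc K)))
      (Submodule.span K ({f * f} : Set (RatFunc K)))
    have k2 := finrank_span_singleton_le (K := K) (f * g)
    have k3 := finrank_span_singleton_le (K := K) (f * f)
    omega
  have hrn := LinearMap.finrank_range_add_finrank_ker ψ
  rw [hfrU] at hrn
  -- the preimage of T inside U
  have hTU : T ≤ U := sfil_mono (Nat.le_succ i)
  set T' : Submodule K ↥U := Submodule.comap U.subtype T with hT'
  have hfrT' : Module.finrank K ↥T' = i := by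
    rw [LinearEquiv.finrank_eq (Submodule.comapSubtypeEquivOfLe hTU), hfrT]
  have hsum := Submodule.finrank_sup_add_finrank_inf_eq (LinearMap.ker ψ) T'
  have hsup_le : Module.finrank K ↥(LinearMap.ker ψ ⊔ T') ≤ i + 1 := by
    rw [← hfrU]
    exact Submodule.finrank_le _
  have hinf : 1 ≤ Module.finrank K ↥(LinearMap.ker ψ ⊓ T') := by omega
  have hne : LinearMap.ker ψ ⊓ T' ≠ ⊥ := by
    intro h0
    rw [h0, finrank_bot] at hinf
    omega
  obtain ⟨w, hw, hw0⟩ := Submodule.exists_mem_ne_zero_of_ne_bot hne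
  have hwT : (w : RatFunc K) ∈ T := hw.2
  have hwker : ψ w = 0 := hw.1
  have hfw : f * (w : RatFunc K) ∈ T * T := by
    rw [hψval, Submodule.mkQ_apply, Submodule.Quotient.mk_eq_zero] at hwker
    exact hwker
  have hwne : (w : RatFunc K) ≠ 0 := by
    intro h0
    exact hw0 (by ext; simpa using h0)
  have hfeq : f = (f * (w : RatFunc K)) * (w : RatFunc K)⁻¹ := by
    field_simp
  rw [hfeq]
  exact mul_mem (sq_mem_Kgen hfw) (inv_mem (subset_Kgen _ hwT))

end sfillems

/-- If `γₙ ≥ 1` and `t` is the least index with `γ_t = γ_n`, then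
`K(S_t) = K(S)`. -/
theorem statement5 (n : ℕ) (S : Submodule K (RatFunc K))
    (hdim : Module.finrank K ↥S = n)
    (p : Option K) (e : Fin n → RatFunc K)
    (hbasis : IsFilteredBasis (plval p) S e)
    (hgn : 1 ≤ cgenus (sfil e n))
    (t : ℕ)
    (ht : IsLeast {i : ℕ | 1 ≤ i ∧ i ≤ n ∧ cgenus (sfil e i) = cgenus (sfil e n)} t) :
    Kgen ((sfil e t : Submodule K (RatFunc K)) : Set (RatFunc K)) = Kgen (S : Set (RatFunc K)) := by
  obtain ⟨hli, hspan, hanti⟩ := hbasis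
  obtain ⟨⟨ht1, htn, htg⟩, -⟩ := ht
  have hsn : sfil e n = S := by
    rw [sfil, ← hspan]
    congr 1
    ext x
    constructor
    · rintro ⟨j, hj, rfl⟩
      exact ⟨j, rfl⟩
    · rintro ⟨j, rfl⟩
      exact ⟨j, j.isLt, rfl⟩
  have mono : ∀ i j : ℕ, 1 ≤ i → i ≤ j → j ≤ n →
      cgenus (sfil e i) ≤ cgenus (sfil e j) := by
    intro i j h1 hij
    induction j, hij using Nat.le_induction with
    | base => exact fun _ => le_rfl
    | succ j' hj' ih =>
      intro hjn
      exact le_trans (ih (by omega)) (genus_step_mono hli hanti (by omega) (by omega))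
  have geq : ∀ i : ℕ, t ≤ i → i ≤ n → cgenus (sfil e i) = cgenus (sfil e n) := by
    intro i hti hin
    refine le_antisymm (mono i n (by omega) hin le_rfl) ?_
    rw [← htg]
    exact mono t i ht1 hti hin
  have key : ∀ i : ℕ, t ≤ i → i ≤ n →
      Kgen ((sfil e i : Submodule K (RatFunc K)) : Set (RatFunc K)) =
        Kgen ((sfil e t : Submodule K (RatFunc K)) : Set (RatFunc K)) := by
    intro i hti
    induction i, hti using Nat.le_induction with
    | base => intro _; rfl
    | succ i' hi' ih =>
      intro hin
      have hin' : i' < n := by omega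
      have hgi1 : cgenus (sfil e (i' + 1)) = cgenus (sfil e i') := by
        rw [geq i' hi' (by omega), geq (i' + 1) (by omega) hin]
      have h3 : 3 ≤ i' := by
        by_contra hcon
        have hsmall := genus_small hli (by omega : 1 ≤ i') (by omega) (by omega)
        have := geq i' hi' (by omega)
        omega
      have hmem := step_main hli hanti h3 hin' hgi1
      rw [← ih (by omega)]
      apply le_antisymm
      · rw [Kgen]
        apply Subfield.closure_le.mpr
        apply Set.union_subset
        · rintro x ⟨a, rfl⟩
          exact C_mem_Kgen _ a
        · intro x hx
          refine span_mem_Kgen ?_ x hx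
          rintro gg ⟨j, hj, rfl⟩
          have hj' : (j : ℕ) < i' + 1 := hj
          rcases Nat.lt_succ_iff_lt_or_eq.mp hj' with hlt | heq
          · exact subset_Kgen _ (mem_sfil j hlt)
          · have : j = ⟨i', hin'⟩ := Fin.ext heq
            rw [this]
            exact hmem
      · exact Kgen_mono (SetLike.coe_subset_coe.mpr (sfil_mono (Nat.le_succ i')))
  rw [← hsn, key n htn le_rfl]

end FFF
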